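/- arXiv:1112.4813 — 3 statements merged into one kernel-verified Lean document; each statement's English description precedes it below -/
import Mathlib

section
/- (Unified Ceva–Menelaus) Under the hypotheses of the generalized Routh theorem (six real parameters x,y,z,u,v,w with (1+x+xv)(1+y+yw)(1+z+zu) ≠ 0 and the relevant denominators nonzero), the points P = AA_x ∩ BB_v, Q = BB_y ∩ CC_w, R = CC_z ∩ AA_u are collinear if and only if 1 - xyw - xzv - uyz + xyz + xyzuvw = 0. -/
def onLine (P A B : ℝ × ℝ) : Prop := P ∈ affineSpan ℝ ({A, B} : Set (ℝ × ℝ))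

lemma onLine_iff (P A B : ℝ × ℝ) : onLine P A B ↔ ∃ s : ℝ, P - A = s • (B - A) := by
  unfold onLine
  have h : P = (P - A) +ᵥ A := by simp [vadd_eq_add]
  rw [h, vadd_left_mem_affineSpan_pair]
  simp [vsub_eq_sub, eq_comm]

lemma collinear_det (p q r : ℝ × ℝ) :
    Collinear ℝ ({p, q, r} : Set (ℝ × ℝ)) ↔
      (q.1 - p.1) * (r.2 - p.2) - (q.2 - p.2) * (r.1 - p.1) = 0 := by
  constructor
  · intro h
    rw [collinear_iff_of_mem (Set.mem_insert p _)] at h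
    obtain ⟨v, hv⟩ := h
    obtain ⟨sq, hq⟩ := hv q (by simp)
    obtain ⟨sr, hr⟩ := hv r (by simp)
    have hq1 : q.1 = sq * v.1 + p.1 := by rw [hq]; rfl
    have hq2 : q.2 = sq * v.2 + p.2 := by rw [hq]; rfl
    have hr1 : r.1 = sr * v.1 + p.1 := by rw [hr]; rfl
    have hr2 : r.2 = sr * v.2 + p.2 := by rw [hr]; rfl
    rw [hq1, hq2, hr1, hr2]; ring
  · intro h
    by_cases hqp : q = p
    · subst hqp
      have : ({q, q, r} : Set (ℝ × ℝ)) = {q, r} := by simp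
      rw [this]; exact collinear_pair ℝ q r
    · rw [collinear_iff_of_mem (Set.mem_insert p _)]
      refine ⟨q - p, ?_⟩
      intro pt hpt
      rcases hpt with h1 | h1 | h1
      · exact ⟨0, by simp [h1]⟩
      · refine ⟨1, ?_⟩; rw [h1]; apply Prod.ext <;> simp [vadd_eq_add]
      · rw [Set.mem_singleton_iff] at h1
        subst h1
        have hne : q.1 - p.1 ≠ 0 ∨ q.2 - p.2 ≠ 0 := by
          by_contra hc
          push_neg at hc
          exact hqp (Prod.ext (by linarith [hc.1]) (by linarith [hc.2]))
        rcases hne with h1 | h1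
        · refine ⟨(pt.1 - p.1) / (q.1 - p.1), ?_⟩
          apply Prod.ext
          · show pt.1 = _ * (q.1 - p.1) + p.1
            field_simp
            ring
          · show pt.2 = _ * (q.2 - p.2) + p.2
            field_simp
            linear_combination h
        · refine ⟨(pt.2 - p.2) / (q.2 - p.2), ?_⟩
          apply Prod.ext
          · show pt.1 = _ * (q.1 - p.1) + p.1
            field_simp
            linear_combination -h
          · show pt.2 = _ * (q.2 - p.2) + p.2
            field_simp
            ring

lemma indep_of_det (a1 a2 b1 b2 : ℝ) (hd : a1 * b2 - a2 * b1 ≠ 0) :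
    ∀ a b : ℝ, a * a1 + b * b1 = 0 → a * a2 + b * b2 = 0 → a = 0 ∧ b = 0 := by
  intro a b h1 h2
  constructor
  · have h : a * (a1 * b2 - a2 * b1) = 0 := by linear_combination b2 * h1 - b1 * h2
    exact (mul_eq_zero.mp h).resolve_right hd
  · have h : b * (a1 * b2 - a2 * b1) = 0 := by linear_combination a1 * h2 - a2 * h1
    exact (mul_eq_zero.mp h).resolve_right hd

lemma inter_coord (V1 V2 V3 Ax Bv P : ℝ × ℝ) (x v : ℝ)
    (hx : (1 : ℝ) + x ≠ 0) (hv : (1 : ℝ) + v ≠ 0)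
    (hind : ∀ a b : ℝ, a * (V2.1 - V1.1) + b * (V3.1 - V1.1) = 0 →
        a * (V2.2 - V1.2) + b * (V3.2 - V1.2) = 0 → a = 0 ∧ b = 0)
    (hAx : Ax - V2 = x • (V3 - Ax)) (hBv : Bv - V3 = v • (V1 - Bv))
    (hP1 : onLine P V1 Ax) (hP2 : onLine P V2 Bv) :
    ((1 + x + x * v) * (P.1 - V1.1) = (V2.1 - V1.1) + x * (V3.1 - V1.1)) ∧
    ((1 + x + x * v) * (P.2 - V1.2) = (V2.2 - V1.2) + x * (V3.2 - V1.2)) := by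
  obtain ⟨s, hs⟩ := (onLine_iff P V1 Ax).mp hP1
  obtain ⟨t, ht⟩ := (onLine_iff P V2 Bv).mp hP2
  have hs1 : P.1 - V1.1 = s * (Ax.1 - V1.1) := congrArg Prod.fst hs
  have hs2 : P.2 - V1.2 = s * (Ax.2 - V1.2) := congrArg Prod.snd hs
  have ht1 : P.1 - V2.1 = t * (Bv.1 - V2.1) := congrArg Prod.fst ht
  have ht2 : P.2 - V2.2 = t * (Bv.2 - V2.2) := congrArg Prod.snd ht
  have hAx1 : Ax.1 - V2.1 = x * (V3.1 - Ax.1) := congrArg Prod.fst hAx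
  have hAx2 : Ax.2 - V2.2 = x * (V3.2 - Ax.2) := congrArg Prod.snd hAx
  have hBv1 : Bv.1 - V3.1 = v * (V1.1 - Bv.1) := congrArg Prod.fst hBv
  have hBv2 : Bv.2 - V3.2 = v * (V1.2 - Bv.2) := congrArg Prod.snd hBv
  obtain ⟨ha, hb⟩ := hind (s * (1 + v) + t * (1 + x) * (1 + v) - (1 + x) * (1 + v))
      (s * (1 + v) * x - t * (1 + x))
      (by linear_combination (1 + x) * (1 + v) * ht1 - (1 + x) * (1 + v) * hs1 -
            s * (1 + v) * hAx1 + t * (1 + x) * hBv1)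
      (by linear_combination (1 + x) * (1 + v) * ht2 - (1 + x) * (1 + v) * hs2 -
            s * (1 + v) * hAx2 + t * (1 + x) * hBv2)
  have key : s * (1 + x + x * v) = 1 + x := by
    have h : (1 + v) * (s * (1 + x + x * v)) = (1 + v) * (1 + x) := by
      linear_combination ha + (1 + v) * hb
    exact mul_left_cancel₀ hv h
  constructor
  · apply mul_left_cancel₀ hx
    linear_combination (1 + x + x * v) * (1 + x) * hs1 + s * (1 + x + x * v) * hAx1 +
      ((V2.1 - V1.1) + x * (V3.1 - V1.1)) * key
  · apply mul_left_cancel₀ hx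
    linear_combination (1 + x + x * v) * (1 + x) * hs2 + s * (1 + x + x * v) * hAx2 +
      ((V2.2 - V1.2) + x * (V3.2 - V1.2)) * key

lemma det_formula (a1 a2 b1 b2 p1 p2 q1 q2 r1 r2 x y z u v w : ℝ)
    (hD1 : 1 + x + x * v ≠ 0) (hD2 : 1 + y + y * w ≠ 0) (hD3 : 1 + z + z * u ≠ 0)
    (hp1 : (1 + x + x * v) * p1 = a1 + x * b1) (hp2 : (1 + x + x * v) * p2 = a2 + x * b2)
    (hq1 : (1 + y + y * w) * q1 = y * w * a1 + b1) (hq2 : (1 + y + y * w) * q2 = y * w * a2 + b2)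
    (hr1 : (1 + z + z * u) * r1 = z * a1 + z * u * b1)
    (hr2 : (1 + z + z * u) * r2 = z * a2 + z * u * b2) :
    ((q1 - p1) * (r2 - p2) - (q2 - p2) * (r1 - p1)) *
        ((1 + x + x * v) * (1 + y + y * w) * (1 + z + z * u)) =
      (1 - x * y * w - x * z * v - u * y * z + x * y * z + x * y * z * u * v * w) *
        (a1 * b2 - a2 * b1) := by
  have ep1 : p1 = (a1 + x * b1) / (1 + x + x * v) := by field_simp; linear_combination hp1
  have ep2 : p2 = (a2 + x * b2) / (1 + x + x * v) := by field_simp; linear_combination hp2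
  have eq1 : q1 = (y * w * a1 + b1) / (1 + y + y * w) := by field_simp; linear_combination hq1
  have eq2 : q2 = (y * w * a2 + b2) / (1 + y + y * w) := by field_simp; linear_combination hq2
  have er1 : r1 = (z * a1 + z * u * b1) / (1 + z + z * u) := by field_simp; linear_combination hr1
  have er2 : r2 = (z * a2 + z * u * b2) / (1 + z + z * u) := by field_simp; linear_combination hr2
  rw [ep1, ep2, eq1, eq2, er1, er2]
  field_simp
  ring

/-- Unified Ceva–Menelaus theorem. -/
theorem unified_ceva_menelaus (A B C Ax Au Bv By Cw Cz P Q R : ℝ × ℝ) (x y z u v w : ℝ)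
    (hABC : ¬ Collinear ℝ ({A, B, C} : Set (ℝ × ℝ)))
    (hden1 : (1 + x) * (1 + y) * (1 + z) * (1 + u) * (1 + v) * (1 + w) ≠ 0)
    (hden2 : (1 + x + x * v) * (1 + y + y * w) * (1 + z + z * u) ≠ 0)
    (hAx : Ax - B = x • (C - Ax)) (hAu : Au - B = u • (C - Au))
    (hBy : By - C = y • (A - By)) (hBv : Bv - C = v • (A - Bv))
    (hCz : Cz - A = z • (B - Cz)) (hCw : Cw - A = w • (B - Cw))
    (hP1 : onLine P A Ax) (hP2 : onLine P B Bv)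
    (hQ1 : onLine Q B By) (hQ2 : onLine Q C Cw)
    (hR1 : onLine R C Cz) (hR2 : onLine R A Au) :
    Collinear ℝ ({P, Q, R} : Set (ℝ × ℝ)) ↔
      1 - x * y * w - x * z * v - u * y * z + x * y * z + x * y * z * u * v * w = 0 := by
  have hd : (B.1 - A.1) * (C.2 - A.2) - (B.2 - A.2) * (C.1 - A.1) ≠ 0 :=
    fun h => hABC ((collinear_det A B C).mpr h)
  have hx : (1 : ℝ) + x ≠ 0 := fun h => hden1 (by rw [h]; ring)
  have hy : (1 : ℝ) + y ≠ 0 := fun h => hden1 (by rw [h]; ring)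
  have hz : (1 : ℝ) + z ≠ 0 := fun h => hden1 (by rw [h]; ring)
  have hu : (1 : ℝ) + u ≠ 0 := fun h => hden1 (by rw [h]; ring)
  have hv : (1 : ℝ) + v ≠ 0 := fun h => hden1 (by rw [h]; ring)
  have hw : (1 : ℝ) + w ≠ 0 := fun h => hden1 (by rw [h]; ring)
  have hD1 : (1 : ℝ) + x + x * v ≠ 0 := fun h => hden2 (by rw [h]; ring)
  have hD2 : (1 : ℝ) + y + y * w ≠ 0 := fun h => hden2 (by rw [h]; ring)
  have hD3 : (1 : ℝ) + z + z * u ≠ 0 := fun h => hden2 (by rw [h]; ring)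
  have indepABC := indep_of_det (B.1 - A.1) (B.2 - A.2) (C.1 - A.1) (C.2 - A.2) hd
  have indepBCA := indep_of_det (C.1 - B.1) (C.2 - B.2) (A.1 - B.1) (A.2 - B.2)
    (fun h => hd (by linear_combination h))
  have indepCAB := indep_of_det (A.1 - C.1) (A.2 - C.2) (B.1 - C.1) (B.2 - C.2)
    (fun h => hd (by linear_combination h))
  have hP := inter_coord A B C Ax Bv P x v hx hv indepABC hAx hBv hP1 hP2
  have hQ := inter_coord B C A By Cw Q y w hy hw indepBCA hBy hCw hQ1 hQ2
  have hR := inter_coord C A B Cz Au R z u hz hu indepCAB hCz hAu hR1 hR2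
  have hkey := det_formula (B.1 - A.1) (B.2 - A.2) (C.1 - A.1) (C.2 - A.2)
    (P.1 - A.1) (P.2 - A.2) (Q.1 - A.1) (Q.2 - A.2) (R.1 - A.1) (R.2 - A.2)
    x y z u v w hD1 hD2 hD3 hP.1 hP.2
    (by linear_combination hQ.1) (by linear_combination hQ.2)
    (by linear_combination hR.1) (by linear_combination hR.2)
  have hkey2 : ((Q.1 - P.1) * (R.2 - P.2) - (Q.2 - P.2) * (R.1 - P.1)) *
      ((1 + x + x * v) * (1 + y + y * w) * (1 + z + z * u)) =
      (1 - x * y * w - x * z * v - u * y * z + x * y * z + x * y * z * u * v * w) *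
        ((B.1 - A.1) * (C.2 - A.2) - (B.2 - A.2) * (C.1 - A.1)) := by
    linear_combination hkey
  rw [collinear_det]
  constructor
  · intro h
    have h0 : (1 - x * y * w - x * z * v - u * y * z + x * y * z + x * y * z * u * v * w) *
        ((B.1 - A.1) * (C.2 - A.2) - (B.2 - A.2) * (C.1 - A.1)) = 0 := by
      rw [← hkey2, h, zero_mul]
    exact (mul_eq_zero.mp h0).resolve_right hd
  · intro h
    have h0 : ((Q.1 - P.1) * (R.2 - P.2) - (Q.2 - P.2) * (R.1 - P.1)) *
        ((1 + x + x * v) * (1 + y + y * w) * (1 + z + z * u)) = 0 := by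
      rw [hkey2, h, zero_mul]
    exact (mul_eq_zero.mp h0).resolve_right hden2
end

section
/- In Routh's configuration with x=y=z=4 (cevians AA_4, BB_4, CC_4 where vector(B,A_4)=4·vector(A_4,C), etc.), the triangle of pairwise intersection points P, Q, R of the cevians has area equal to 3/7 of the area of triangle ABC. -/
noncomputable def signedArea (P Q R : ℝ × ℝ) : ℝ :=
  ((Q.1 - P.1) * (R.2 - P.2) - (R.1 - P.1) * (Q.2 - P.2)) / 2

lemma onLine_param {P A B : ℝ × ℝ} (h : onLine P A B) :
    ∃ r : ℝ, P.1 = A.1 + r * (B.1 - A.1) ∧ P.2 = A.2 + r * (B.2 - A.2) := by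
  unfold onLine at h
  rw [show P = (P - A) +ᵥ A by simp [vadd_eq_add]] at h
  rcases (vadd_left_mem_affineSpan_pair).mp h with ⟨r, hr⟩
  refine ⟨r, ?_, ?_⟩
  · have := congrArg Prod.fst hr
    simp [Prod.smul_def, vsub_eq_sub] at this
    linarith [this]
  · have := congrArg Prod.snd hr
    simp [Prod.smul_def, vsub_eq_sub] at this
    linarith [this]

/-- Key intersection computation. -/
lemma inter_point (A B C Ax By P : ℝ × ℝ)
    (hD : (B.1 - A.1) * (C.2 - A.2) - (C.1 - A.1) * (B.2 - A.2) ≠ 0)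
    (hAx : Ax - B = (4 : ℝ) • (C - Ax))
    (hBy : By - C = (4 : ℝ) • (A - By))
    (hP1 : onLine P A Ax) (hP2 : onLine P B By) :
    P.1 = (16 * A.1 + B.1 + 4 * C.1) / 21 ∧ P.2 = (16 * A.2 + B.2 + 4 * C.2) / 21 := by
  have hAx1 : Ax.1 = (B.1 + 4 * C.1) / 5 := by
    have := congrArg Prod.fst hAx; simp [Prod.smul_def] at this; linarith
  have hAx2 : Ax.2 = (B.2 + 4 * C.2) / 5 := by
    have := congrArg Prod.snd hAx; simp [Prod.smul_def] at this; linarith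
  have hBy1 : By.1 = (C.1 + 4 * A.1) / 5 := by
    have := congrArg Prod.fst hBy; simp [Prod.smul_def] at this; linarith
  have hBy2 : By.2 = (C.2 + 4 * A.2) / 5 := by
    have := congrArg Prod.snd hBy; simp [Prod.smul_def] at this; linarith
  obtain ⟨s, hs1, hs2⟩ := onLine_param hP1
  obtain ⟨t, ht1, ht2⟩ := onLine_param hP2
  rw [hAx1] at hs1; rw [hAx2] at hs2
  rw [hBy1] at ht1; rw [hBy2] at ht2
  have key : (21 * s - 5) * ((B.1 - A.1) * (C.2 - A.2) - (C.1 - A.1) * (B.2 - A.2)) = 0 := by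
    linear_combination (C.1 + 4 * A.1 - 5 * B.1) * 5 * (hs2 - ht2)
      - (C.2 + 4 * A.2 - 5 * B.2) * 5 * (hs1 - ht1)
  have hs : s = 5 / 21 := by
    rcases mul_eq_zero.mp key with h | h
    · linarith
    · exact absurd h hD
  subst hs
  constructor
  · rw [hs1]; ring
  · rw [hs2]; ring

/-- Routh's configuration with x=y=z=4. -/
theorem routh_four_four_four (A B C Ax By Cz P Q R : ℝ × ℝ)
    (hABC : ¬ Collinear ℝ ({A, B, C} : Set (ℝ × ℝ)))
    (hAx : Ax - B = (4 : ℝ) • (C - Ax))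
    (hBy : By - C = (4 : ℝ) • (A - By))
    (hCz : Cz - A = (4 : ℝ) • (B - Cz))
    (hP1 : onLine P A Ax) (hP2 : onLine P B By)
    (hQ1 : onLine Q B By) (hQ2 : onLine Q C Cz)
    (hR1 : onLine R C Cz) (hR2 : onLine R A Ax) :
    |signedArea P Q R| = (3/7 : ℝ) * |signedArea A B C| := by
  -- D ≠ 0 from non-collinearity
  have hD : (B.1 - A.1) * (C.2 - A.2) - (C.1 - A.1) * (B.2 - A.2) ≠ 0 := by
    intro h
    apply hABC
    by_cases hAB : B = A
    · subst hAB
      have : ({B, B, C} : Set (ℝ × ℝ)) = {B, C} := by simp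
      rw [this]; exact collinear_pair ℝ B C
    · have hu : B.1 - A.1 ≠ 0 ∨ B.2 - A.2 ≠ 0 := by
        by_contra hc
        push_neg at hc
        exact hAB (Prod.ext (by linarith [hc.1]) (by linarith [hc.2]))
      have : ∃ r : ℝ, C = r • (B - A) + A := by
        rcases hu with h1 | h1
        · refine ⟨(C.1 - A.1) / (B.1 - A.1), ?_⟩
          apply Prod.ext <;> simp [Prod.smul_def] <;> field_simp <;> nlinarith [h]
        · refine ⟨(C.2 - A.2) / (B.2 - A.2), ?_⟩
          apply Prod.ext <;> simp [Prod.smul_def] <;> field_simp <;> nlinarith [h]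
      obtain ⟨r, hr⟩ := this
      have hC : C ∈ line[ℝ, A, B] := by
        rw [hr, show r • (B - A) + A = r • (B -ᵥ A) +ᵥ A by simp [vadd_eq_add, vsub_eq_sub]]
        exact smul_vsub_vadd_mem_affineSpan_pair r A B
      have h3 : Collinear ℝ ({C, A, B} : Set (ℝ × ℝ)) :=
        collinear_insert_of_mem_affineSpan_pair hC
      have : ({A, B, C} : Set (ℝ × ℝ)) = {C, A, B} := by ext x; simp; tauto
      rw [this]; exact h3
  have hDB : (C.1 - B.1) * (A.2 - B.2) - (A.1 - B.1) * (C.2 - B.2) ≠ 0 := by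
    intro h; apply hD; linarith
  have hDC : (A.1 - C.1) * (B.2 - C.2) - (B.1 - C.1) * (A.2 - C.2) ≠ 0 := by
    intro h; apply hD; linarith
  obtain ⟨hPx, hPy⟩ := inter_point A B C Ax By P hD hAx hBy hP1 hP2
  obtain ⟨hQx, hQy⟩ := inter_point B C A By Cz Q hDB hBy hCz hQ1 hQ2
  obtain ⟨hRx, hRy⟩ := inter_point C A B Cz Ax R hDC hCz hAx hR1 hR2
  have harea : signedArea P Q R = (3/7 : ℝ) * signedArea A B C := by
    unfold signedArea
    rw [hPx, hPy, hQx, hQy, hRx, hRy]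
    ring
  rw [harea, abs_mul]
  norm_num
end

section
/- In the generalized Routh configuration with u=v=w=7 and x=y=z=1, the triangle PQR of intersection points has area equal to 4/9 of the area of triangle ABC. -/
lemma onLine_param_s15 {P A B : ℝ × ℝ} (h : onLine P A B) :
    ∃ t : ℝ, P - A = t • (B - A) := by
  have : (P - A) +ᵥ A ∈ affineSpan ℝ ({A, B} : Set (ℝ × ℝ)) := by simpa [onLine] using h
  rw [vadd_left_mem_affineSpan_pair] at this
  obtain ⟨r, hr⟩ := this
  exact ⟨r, hr.symm⟩

lemma collinear_of_det {A B C : ℝ × ℝ}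
    (hd : (B.1 - A.1) * (C.2 - A.2) - (C.1 - A.1) * (B.2 - A.2) = 0) :
    Collinear ℝ ({A, B, C} : Set (ℝ × ℝ)) := by
  rcases eq_or_ne C A with hCA | hCA
  · rw [hCA]
    have hset : ({A, B, A} : Set (ℝ × ℝ)) = {B, A} := by
      rw [Set.insert_comm]; simp
    rw [hset]
    exact collinear_pair ℝ B A
  · have hne : C.1 - A.1 ≠ 0 ∨ C.2 - A.2 ≠ 0 := by
      by_contra hc
      push_neg at hc
      apply hCA
      have h1 : C.1 = A.1 := by linarith [hc.1]
      have h2 : C.2 = A.2 := by linarith [hc.2]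
      exact Prod.ext h1 h2
    have : ∃ r : ℝ, B - A = r • (C - A) := by
      rcases hne with h | h
      · refine ⟨(B.1 - A.1) / (C.1 - A.1), Prod.ext ?_ ?_⟩
        · simp only [Prod.fst_sub, Prod.smul_fst, smul_eq_mul]
          field_simp
        · simp only [Prod.snd_sub, Prod.smul_snd, smul_eq_mul]
          field_simp
          linear_combination -hd
      · refine ⟨(B.2 - A.2) / (C.2 - A.2), Prod.ext ?_ ?_⟩
        · simp only [Prod.fst_sub, Prod.smul_fst, smul_eq_mul]
          field_simp
          linear_combination hd
        · simp only [Prod.snd_sub, Prod.smul_snd, smul_eq_mul]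
          field_simp
    obtain ⟨r, hr⟩ := this
    have hB : B ∈ affineSpan ℝ ({A, C} : Set (ℝ × ℝ)) := by
      have : (B - A) +ᵥ A ∈ affineSpan ℝ ({A, C} : Set (ℝ × ℝ)) := by
        rw [vadd_left_mem_affineSpan_pair]
        exact ⟨r, by simpa using hr.symm⟩
      simpa using this
    have := collinear_insert_of_mem_affineSpan_pair hB
    rwa [Set.insert_comm] at this

/-- Generalized Routh configuration with x=y=z=1, u=v=w=7. -/
theorem generalized_routh_x1_u7 (A B C Ax Au Bv By Cw Cz P Q R : ℝ × ℝ)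
    (hABC : ¬ Collinear ℝ ({A, B, C} : Set (ℝ × ℝ)))
    (hAx : Ax - B = (1 : ℝ) • (C - Ax)) (hAu : Au - B = (7 : ℝ) • (C - Au))
    (hBy : By - C = (1 : ℝ) • (A - By)) (hBv : Bv - C = (7 : ℝ) • (A - Bv))
    (hCz : Cz - A = (1 : ℝ) • (B - Cz)) (hCw : Cw - A = (7 : ℝ) • (B - Cw))
    (hP1 : onLine P A Ax) (hP2 : onLine P B Bv)
    (hQ1 : onLine Q B By) (hQ2 : onLine Q C Cw)
    (hR1 : onLine R C Cz) (hR2 : onLine R A Au) :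
    |signedArea P Q R| = (4/9 : ℝ) * |signedArea A B C| := by
  obtain ⟨t1, h1⟩ := onLine_param_s15 hP1
  obtain ⟨t2, h2⟩ := onLine_param_s15 hP2
  obtain ⟨s1, h3⟩ := onLine_param_s15 hQ1
  obtain ⟨s2, h4⟩ := onLine_param_s15 hQ2
  obtain ⟨u1, h5⟩ := onLine_param_s15 hR1
  obtain ⟨u2, h6⟩ := onLine_param_s15 hR2
  rw [Prod.ext_iff] at hAx hAu hBy hBv hCz hCw h1 h2 h3 h4 h5 h6
  simp only [Prod.fst_sub, Prod.snd_sub, Prod.smul_fst, Prod.smul_snd, smul_eq_mul] at hAx hAu hBy hBv hCz hCw h1 h2 h3 h4 h5 h6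
  -- determinant nonzero
  have hd : (B.1 - A.1) * (C.2 - A.2) - (C.1 - A.1) * (B.2 - A.2) ≠ 0 := by
    intro h0
    exact hABC (collinear_of_det h0)
  have key : ∀ a b : ℝ, a * (B.1 - A.1) + b * (C.1 - A.1) = 0 →
      a * (B.2 - A.2) + b * (C.2 - A.2) = 0 → a = 0 ∧ b = 0 := by
    intro a b hx hy
    have ha : a * ((B.1 - A.1) * (C.2 - A.2) - (C.1 - A.1) * (B.2 - A.2)) = 0 := by
      linear_combination (C.2 - A.2) * hx - (C.1 - A.1) * hy
    have hb : b * ((B.1 - A.1) * (C.2 - A.2) - (C.1 - A.1) * (B.2 - A.2)) = 0 := by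
      linear_combination (B.1 - A.1) * hy - (B.2 - A.2) * hx
    constructor
    · rcases mul_eq_zero.mp ha with h | h
      · exact h
      · exact absurd h hd
    · rcases mul_eq_zero.mp hb with h | h
      · exact h
      · exact absurd h hd
  -- solve for P
  have hPc := key (1 - t2 - t1/2) (t2/8 - t1/2)
    (by linear_combination h1.1 - h2.1 + (t1/2) * hAx.1 - (t2/8) * hBv.1)
    (by linear_combination h1.2 - h2.2 + (t1/2) * hAx.2 - (t2/8) * hBv.2)
  have ht1 : t1 = 2/9 := by
    have e1 := hPc.1; have e2 := hPc.2; linarith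
  have hPx : P.1 = (7*A.1 + B.1 + C.1)/9 := by
    linear_combination h1.1 + (1/9) * hAx.1 + (Ax.1 - A.1) * ht1
  have hPy : P.2 = (7*A.2 + B.2 + C.2)/9 := by
    linear_combination h1.2 + (1/9) * hAx.2 + (Ax.2 - A.2) * ht1
  -- solve for Q
  have hQc := key (1 - s1 - 7*s2/8) (s1/2 + s2 - 1)
    (by linear_combination h4.1 - h3.1 - (s1/2) * hBy.1 + (s2/8) * hCw.1)
    (by linear_combination h4.2 - h3.2 - (s1/2) * hBy.2 + (s2/8) * hCw.2)
  have hs1 : s1 = 2/9 := by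
    have e1 := hQc.1; have e2 := hQc.2; linarith
  have hQx : Q.1 = (A.1 + 7*B.1 + C.1)/9 := by
    linear_combination h3.1 + (1/9) * hBy.1 + (By.1 - B.1) * hs1
  have hQy : Q.2 = (A.2 + 7*B.2 + C.2)/9 := by
    linear_combination h3.2 + (1/9) * hBy.2 + (By.2 - B.2) * hs1
  -- solve for R
  have hRc := key (u1/2 - u2/8) (1 - u1 - 7*u2/8)
    (by linear_combination h6.1 - h5.1 - (u1/2) * hCz.1 + (u2/8) * hAu.1)
    (by linear_combination h6.2 - h5.2 - (u1/2) * hCz.2 + (u2/8) * hAu.2)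
  have hu1 : u1 = 2/9 := by
    have e1 := hRc.1; have e2 := hRc.2; linarith
  have hRx : R.1 = (A.1 + B.1 + 7*C.1)/9 := by
    linear_combination h5.1 + (1/9) * hCz.1 + (Cz.1 - C.1) * hu1
  have hRy : R.2 = (A.2 + B.2 + 7*C.2)/9 := by
    linear_combination h5.2 + (1/9) * hCz.2 + (Cz.2 - C.2) * hu1
  have harea : signedArea P Q R = (4/9 : ℝ) * signedArea A B C := by
    simp only [signedArea]
    rw [hPx, hPy, hQx, hQy, hRx, hRy]
    ring
  rw [harea, abs_mul]
  norm_num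
end
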